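/- The function u ↦ Im(u)⁴ / (|u|⁴ · |u − 1|⁴) is integrable on ℍ with respect to two-dimensional Lebesgue measure, and ∫_ℍ Im(u)⁴ / (|u|⁴ |u − 1|⁴) dA(u) = 3π/8. -/

import Mathlib

open MeasureTheory Real Filter Topology Set

noncomputable section

/-- scaled integrand in x for fixed height a -/
def fI (a x : ℝ) : ℝ := a^4 / ((x^2+a^2)^2 * ((x-1)^2+a^2)^2)

/-- antiderivative of fI in x -/
def FI (a x : ℝ) : ℝ :=
  (a^4/(1+4*a^2)^2) * (-2/(x^2+a^2) + 2/((x-1)^2+a^2))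
  + (a^2*(1-4*a^2)/(2*(1+4*a^2)^2)) * (x/(x^2+a^2) + (x-1)/((x-1)^2+a^2))
  + (a*(1+20*a^2)/(2*(1+4*a^2)^3)) * (arctan (x/a) + arctan ((x-1)/a))
  + (2*a^4*(4*a^2+5)/(1+4*a^2)^3) * (Real.log (x^2+a^2) - Real.log ((x-1)^2+a^2))

lemma hasDerivAt_FI {a : ℝ} (ha : 0 < a) (x : ℝ) : HasDerivAt (FI a) (fI a x) x := by
  have hX : (0:ℝ) < x^2+a^2 := by positivity
  have hX' : (0:ℝ) < (x-1)^2+a^2 := by positivity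
  have hq : (0:ℝ) < 1+4*a^2 := by positivity
  have hxa : HasDerivAt (fun x : ℝ => x^2+a^2) (2*x) x := by
    simpa using ((hasDerivAt_id x).pow 2).add_const (a^2)
  have hxa' : HasDerivAt (fun x : ℝ => (x-1)^2+a^2) (2*(x-1)) x := by
    have h0 : HasDerivAt (fun x : ℝ => x-1) 1 x := (hasDerivAt_id x).sub_const 1
    simpa using (h0.pow 2).add_const (a^2)
  have h1 : HasDerivAt (fun x => -2/(x^2+a^2) + 2/((x-1)^2+a^2))
      ((0*(x^2+a^2) - (-2)*(2*x))/(x^2+a^2)^2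
        + (0*((x-1)^2+a^2) - 2*(2*(x-1)))/((x-1)^2+a^2)^2) x := by
    exact ((hasDerivAt_const x (-2:ℝ)).div hxa hX.ne').add
      ((hasDerivAt_const x (2:ℝ)).div hxa' hX'.ne')
  have h2 : HasDerivAt (fun x => x/(x^2+a^2) + (x-1)/((x-1)^2+a^2))
      ((1*(x^2+a^2) - x*(2*x))/(x^2+a^2)^2
        + (1*((x-1)^2+a^2) - (x-1)*(2*(x-1)))/((x-1)^2+a^2)^2) x := by
    exact ((hasDerivAt_id x).div hxa hX.ne').add
      (((hasDerivAt_id x).sub_const 1).div hxa' hX'.ne')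
  have h3 : HasDerivAt (fun x => arctan (x/a) + arctan ((x-1)/a))
      ((1/(1+(x/a)^2)) * (1/a) + (1/(1+((x-1)/a)^2)) * (1/a)) x := by
    have d1 : HasDerivAt (fun x : ℝ => x/a) (1/a) x := (hasDerivAt_id x).div_const a
    have d2 : HasDerivAt (fun x : ℝ => (x-1)/a) (1/a) x :=
      ((hasDerivAt_id x).sub_const 1).div_const a
    exact ((Real.hasDerivAt_arctan (x/a)).comp x d1).add
      ((Real.hasDerivAt_arctan ((x-1)/a)).comp x d2)
  have h4 : HasDerivAt (fun x => Real.log (x^2+a^2) - Real.log ((x-1)^2+a^2))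
      ((2*x)/(x^2+a^2) - (2*(x-1))/((x-1)^2+a^2)) x :=
    (hxa.log hX.ne').sub (hxa'.log hX'.ne')
  have := (((h1.const_mul (a^4/(1+4*a^2)^2)).add
      (h2.const_mul (a^2*(1-4*a^2)/(2*(1+4*a^2)^2)))).add
      (h3.const_mul (a*(1+20*a^2)/(2*(1+4*a^2)^3)))).add
      (h4.const_mul (2*a^4*(4*a^2+5)/(1+4*a^2)^3))
  refine this.congr_deriv ?_
  have h5 : 1+(x/a)^2 = (x^2+a^2)/a^2 := by field_simp; ring
  have h6 : 1+((x-1)/a)^2 = ((x-1)^2+a^2)/a^2 := by field_simp; ring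
  rw [fI, h5, h6]
  field_simp
  ring

lemma FI_symm (a x : ℝ) : FI a (1-x) = - FI a x := by
  have e1 : (1-x)^2+a^2 = (x-1)^2+a^2 := by ring
  have e2 : (1-x-1)^2+a^2 = x^2+a^2 := by ring
  have e3 : (1-x)/a = -((x-1)/a) := by ring
  have e4 : (1-x-1)/a = -(x/a) := by ring
  simp only [FI, e1, e2, e3, e4, Real.arctan_neg]
  ring

lemma tendsto_X_atTop (a : ℝ) : Tendsto (fun x : ℝ => x^2+a^2) atTop atTop :=
  tendsto_atTop_add_const_right _ _ (tendsto_pow_atTop two_ne_zero)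

lemma tendsto_X'_atTop (a : ℝ) : Tendsto (fun x : ℝ => (x-1)^2+a^2) atTop atTop := by
  have : Tendsto (fun x : ℝ => x-1) atTop atTop := tendsto_atTop_add_const_right _ _ tendsto_id
  exact (tendsto_X_atTop a).comp this

lemma tendsto_FI_atTop {a : ℝ} (ha : 0 < a) :
    Tendsto (FI a) atTop (𝓝 (a*(1+20*a^2)/(2*(1+4*a^2)^3) * π)) := by
  have hX := tendsto_X_atTop a
  have hX' := tendsto_X'_atTop a
  -- term 1
  have t1 : Tendsto (fun x : ℝ => -2/(x^2+a^2) + 2/((x-1)^2+a^2)) atTop (𝓝 0) := by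
    have h1 := hX.inv_tendsto_atTop.const_mul (-2:ℝ)
    have h2 := hX'.inv_tendsto_atTop.const_mul (2:ℝ)
    simpa [div_eq_mul_inv] using h1.add h2
  -- term 2
  have t2a : Tendsto (fun x : ℝ => x/(x^2+a^2)) atTop (𝓝 0) := by
    apply squeeze_zero_norm' ?_ tendsto_inv_atTop_zero
    filter_upwards [eventually_ge_atTop (1:ℝ)] with x hx
    have hx0 : (0:ℝ) < x := by linarith
    rw [Real.norm_eq_abs, abs_of_nonneg (by positivity)]
    rw [div_le_iff₀ (by positivity)]
    rw [inv_mul_eq_div, le_div_iff₀ hx0]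
    nlinarith [sq_nonneg a]
  have t2b : Tendsto (fun x : ℝ => (x-1)/((x-1)^2+a^2)) atTop (𝓝 0) := by
    have := t2a.comp (tendsto_atTop_add_const_right atTop (-1:ℝ) tendsto_id)
    simpa [Function.comp_def, sub_eq_add_neg] using this
  have t2 : Tendsto (fun x : ℝ => x/(x^2+a^2) + (x-1)/((x-1)^2+a^2)) atTop (𝓝 0) := by
    simpa using t2a.add t2b
  -- term 3
  have t3a : Tendsto (fun x : ℝ => arctan (x/a)) atTop (𝓝 (π/2)) := by
    have hdiv : Tendsto (fun x : ℝ => x/a) atTop atTop := tendsto_id.atTop_div_const ha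
    exact (tendsto_nhds_of_tendsto_nhdsWithin Real.tendsto_arctan_atTop).comp hdiv
  have t3b : Tendsto (fun x : ℝ => arctan ((x-1)/a)) atTop (𝓝 (π/2)) := by
    have := t3a.comp (tendsto_atTop_add_const_right atTop (-1:ℝ) tendsto_id)
    simpa [Function.comp_def, sub_eq_add_neg] using this
  have t3 : Tendsto (fun x : ℝ => arctan (x/a) + arctan ((x-1)/a)) atTop (𝓝 (π/2+π/2)) :=
    t3a.add t3b
  -- term 4
  have t4 : Tendsto (fun x : ℝ => Real.log (x^2+a^2) - Real.log ((x-1)^2+a^2)) atTop (𝓝 0) := by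
    have hr : Tendsto (fun x : ℝ => (2*x-1)/((x-1)^2+a^2)) atTop (𝓝 0) := by
      apply squeeze_zero_norm' (a := fun x : ℝ => 4*(x-1)⁻¹) ?_
        (by simpa [sub_eq_add_neg] using (((tendsto_atTop_add_const_right atTop (-1:ℝ)
          tendsto_id).inv_tendsto_atTop).const_mul (4:ℝ)))
      filter_upwards [eventually_ge_atTop (2:ℝ)] with x hx
      have h1 : (0:ℝ) < x - 1 := by linarith
      rw [Real.norm_eq_abs, abs_of_nonneg (div_nonneg (by linarith) (by positivity))]
      rw [inv_eq_one_div, mul_one_div, div_le_div_iff₀ (by positivity) h1]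
      nlinarith [sq_nonneg a, sq_nonneg (x-2)]
    have hlim : Tendsto (fun x : ℝ => Real.log (1 + (2*x-1)/((x-1)^2+a^2))) atTop (𝓝 0) := by
      have : Tendsto (fun x : ℝ => 1 + (2*x-1)/((x-1)^2+a^2)) atTop (𝓝 1) := by
        simpa using (tendsto_const_nhds (x := (1:ℝ))).add hr
      have hc : ContinuousAt Real.log 1 := Real.continuousAt_log one_ne_zero
      simpa [Real.log_one, Function.comp_def] using (hc.tendsto.comp this)
    apply hlim.congr'
    filter_upwards [eventually_gt_atTop (0:ℝ)] with x hx
    have hX0 : (0:ℝ) < x^2+a^2 := by positivity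
    have hX'0 : (0:ℝ) < (x-1)^2+a^2 := by positivity
    rw [show (1:ℝ) + (2*x-1)/((x-1)^2+a^2) = (x^2+a^2)/((x-1)^2+a^2) by field_simp; ring,
      Real.log_div hX0.ne' hX'0.ne']
  -- assemble
  have := (((t1.const_mul (a^4/(1+4*a^2)^2)).add
      (t2.const_mul (a^2*(1-4*a^2)/(2*(1+4*a^2)^2)))).add
      (t3.const_mul (a*(1+20*a^2)/(2*(1+4*a^2)^3)))).add
      (t4.const_mul (2*a^4*(4*a^2+5)/(1+4*a^2)^3))
  have h : a*(1+20*a^2)/(2*(1+4*a^2)^3) * π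
      = a^4/(1+4*a^2)^2 * 0 + a^2*(1-4*a^2)/(2*(1+4*a^2)^2) * 0
        + a*(1+20*a^2)/(2*(1+4*a^2)^3) * (π/2+π/2) + 2*a^4*(4*a^2+5)/(1+4*a^2)^3 * 0 := by ring
  rw [h]
  exact this

lemma tendsto_FI_atBot {a : ℝ} (ha : 0 < a) :
    Tendsto (FI a) atBot (𝓝 (-(a*(1+20*a^2)/(2*(1+4*a^2)^3) * π))) := by
  have h1 : Tendsto (fun x : ℝ => 1 - x) atBot atTop := by
    simpa [sub_eq_add_neg] using tendsto_atTop_add_const_left atBot (1:ℝ)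
      (tendsto_neg_atBot_atTop : Tendsto (fun x : ℝ => -x) atBot atTop)
  have := ((tendsto_FI_atTop ha).comp h1).neg
  apply this.congr
  intro x
  simp [Function.comp, ← FI_symm]

lemma continuous_fI {a : ℝ} (ha : 0 < a) : Continuous (fI a) := by
  apply Continuous.div continuous_const
  · fun_prop
  · intro x
    positivity

lemma integrable_fI {a : ℝ} (ha : 0 < a) : Integrable (fI a) := by
  set m : ℝ := min (a^2) 1 with hm
  have hm0 : 0 < m := lt_min (by positivity) one_pos
  apply Integrable.mono' (g := fun x : ℝ => (a^2*m)⁻¹ * (1+x^2)⁻¹)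
    (integrable_inv_one_add_sq.const_mul _) ((continuous_fI ha).aestronglyMeasurable)
  filter_upwards with x
  have hX : (0:ℝ) < x^2+a^2 := by positivity
  have hX' : (0:ℝ) < (x-1)^2+a^2 := by positivity
  have h1 : m*(1+x^2) ≤ x^2+a^2 := by
    rcases le_total (a^2) 1 with h | h
    · rw [hm, min_eq_left h]; nlinarith [sq_nonneg x, sq_nonneg a]
    · rw [hm, min_eq_right h]; nlinarith
  have h2 : a^2*m*(1+x^2)*a^4 ≤ (x^2+a^2)^2 * ((x-1)^2+a^2)^2 := by
    have ha2 : a^2 ≤ x^2+a^2 := by nlinarith [sq_nonneg x]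
    have ha4 : a^4 ≤ ((x-1)^2+a^2)^2 := by nlinarith [sq_nonneg (x-1), sq_nonneg a]
    have key : m*(1+x^2)*a^2 ≤ (x^2+a^2)*(x^2+a^2) :=
      mul_le_mul h1 ha2 (by positivity) hX.le
    have step1 : a^2*m*(1+x^2)*a^4 ≤ (x^2+a^2)^2*a^4 := by nlinarith [sq_nonneg a, sq_nonneg (a^2)]
    refine step1.trans ?_
    exact mul_le_mul_of_nonneg_left ha4 (by positivity)
  simp only [fI, Real.norm_eq_abs]
  rw [abs_of_nonneg (by positivity)]
  calc a^4/((x^2+a^2)^2 * ((x-1)^2+a^2)^2) ≤ a^4/(a^2*m*(1+x^2)*a^4) :=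
        div_le_div_of_nonneg_left (by positivity) (by positivity) h2
    _ = (a^2*m)⁻¹ * (1+x^2)⁻¹ := by field_simp

lemma integral_fI {a : ℝ} (ha : 0 < a) :
    ∫ x : ℝ, fI a x = π*a*(20*a^2+1)/(1+4*a^2)^3 := by
  rw [integral_of_hasDerivAt_of_tendsto (hasDerivAt_FI ha) (integrable_fI ha)
    (tendsto_FI_atBot ha) (tendsto_FI_atTop ha)]
  have hq : ((1:ℝ)+4*a^2) ≠ 0 := by positivity
  field_simp
  ring

/-- the inner-integral value as a function of the height -/
def gI (a : ℝ) : ℝ := π*a*(20*a^2+1)/(1+4*a^2)^3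

/-- antiderivative of gI -/
def GI (a : ℝ) : ℝ := (π/8) * (-5/(1+4*a^2) + 2/(1+4*a^2)^2)

lemma hasDerivAt_GI (a : ℝ) : HasDerivAt GI (gI a) a := by
  have hq : (0:ℝ) < 1+4*a^2 := by positivity
  have hqd : HasDerivAt (fun a : ℝ => 1+4*a^2) (8*a) a := by
    have := (((hasDerivAt_id a).pow 2).const_mul (4:ℝ)).const_add (1:ℝ)
    simpa using this.congr_deriv (by simp; ring)
  have h1 : HasDerivAt (fun a : ℝ => -5/(1+4*a^2))
      ((0*(1+4*a^2) - (-5)*(8*a))/(1+4*a^2)^2) a :=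
    (hasDerivAt_const a (-5:ℝ)).div hqd hq.ne'
  have h2 : HasDerivAt (fun a : ℝ => 2/(1+4*a^2)^2)
      ((0*((1+4*a^2)^2) - 2*(2*(1+4*a^2)^1*(8*a)))/((1+4*a^2)^2)^2) a :=
    (hasDerivAt_const a (2:ℝ)).div (hqd.pow 2) (by positivity)
  have := (h1.add h2).const_mul (π/8)
  refine this.congr_deriv ?_
  rw [gI]
  field_simp
  ring

lemma tendsto_GI_atTop : Tendsto GI atTop (𝓝 0) := by
  have hq : Tendsto (fun a : ℝ => 1+4*a^2) atTop atTop := by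
    apply tendsto_atTop_add_const_left
    exact (tendsto_pow_atTop two_ne_zero).const_mul_atTop (by norm_num)
  have h1 := hq.inv_tendsto_atTop.const_mul (-5:ℝ)
  have h2 := (hq.inv_tendsto_atTop.mul hq.inv_tendsto_atTop).const_mul (2:ℝ)
  have := (h1.add h2).const_mul (π/8)
  simp only [mul_zero, add_zero, zero_mul] at this
  apply this.congr
  intro a
  simp only [Pi.inv_apply]
  rw [GI]
  have : (0:ℝ) < 1+4*a^2 := by positivity
  field_simp

lemma gI_nonneg {a : ℝ} (ha : 0 < a) : 0 ≤ gI a := by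
  rw [gI]; positivity

lemma integrableOn_gI : IntegrableOn gI (Ioi (0:ℝ)) := by
  apply integrableOn_Ioi_deriv_of_nonneg' (g' := gI) (fun x _ => hasDerivAt_GI x)
    (fun x hx => gI_nonneg hx) tendsto_GI_atTop

lemma integral_gI : ∫ a in Ioi (0:ℝ), gI a = 3*π/8 := by
  rw [integral_Ioi_of_hasDerivAt_of_tendsto' (fun x _ => hasDerivAt_GI x)
    integrableOn_gI tendsto_GI_atTop]
  rw [GI]
  norm_num
  ring

/-- the integrand on ℝ × ℝ -/
def HI (p : ℝ × ℝ) : ℝ := p.2^4 / ((p.1^2+p.2^2)^2 * ((p.1-1)^2+p.2^2)^2)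

lemma HI_eq_fI (x a : ℝ) : HI (x, a) = fI a x := rfl

lemma measurable_HI : Measurable HI := by
  apply Measurable.div <;> fun_prop

lemma integrable_HI : Integrable HI (volume.prod (volume.restrict (Ioi (0:ℝ)))) := by
  rw [integrable_prod_iff' measurable_HI.aestronglyMeasurable]
  constructor
  · rw [ae_restrict_iff' measurableSet_Ioi]
    filter_upwards with a ha
    exact (integrable_fI ha).congr (by filter_upwards with x; rw [HI_eq_fI])
  · apply integrableOn_gI.congr
    rw [EventuallyEq, ae_restrict_iff' measurableSet_Ioi]
    filter_upwards with a ha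
    have h1 : ∀ x : ℝ, ‖HI (x, a)‖ = fI a x := by
      intro x
      rw [HI_eq_fI, Real.norm_eq_abs, abs_of_nonneg (by rw [fI]; positivity)]
    rw [gI, ← integral_fI ha]
    exact (integral_congr_ae (by filter_upwards with x; rw [h1])).symm

lemma integral_HI :
    ∫ p : ℝ × ℝ, HI p ∂(volume.prod (volume.restrict (Ioi (0:ℝ)))) = 3*π/8 := by
  rw [integral_prod_symm HI integrable_HI]
  rw [← integral_gI]
  apply setIntegral_congr_ae measurableSet_Ioi
  filter_upwards with a ha
  simp_rw [HI_eq_fI]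
  exact integral_fI ha

lemma prodRestrict_eq : (volume : Measure (ℝ × ℝ)).restrict (univ ×ˢ Ioi (0:ℝ))
    = volume.prod (volume.restrict (Ioi (0:ℝ))) := by
  rw [MeasureTheory.Measure.volume_eq_prod, ← Measure.prod_restrict, Measure.restrict_univ]

lemma e_apply (z : ℂ) : Complex.measurableEquivRealProd z = (z.re, z.im) := rfl

lemma set_eq : {z : ℂ | 0 < z.im} = Complex.measurableEquivRealProd ⁻¹' (univ ×ˢ Ioi (0:ℝ)) := by
  ext z
  simp [e_apply]

lemma fun_eq : (fun u : ℂ => u.im ^ 4 / (‖u‖ ^ 4 * ‖u - 1‖ ^ 4))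
    = fun u : ℂ => HI (Complex.measurableEquivRealProd u) := by
  funext u
  rw [e_apply, HI]
  have h1 : ‖u‖ ^ 4 = (u.re^2 + u.im^2)^2 := by
    rw [show (4:ℕ) = 2*2 from rfl, pow_mul, Complex.sq_norm, Complex.normSq_apply]
    ring_nf
  have h2 : ‖u-1‖ ^ 4 = ((u.re-1)^2 + u.im^2)^2 := by
    rw [show (4:ℕ) = 2*2 from rfl, pow_mul, Complex.sq_norm, Complex.normSq_apply]
    simp [Complex.sub_re, Complex.sub_im]
    ring_nf
  rw [h1, h2]

set_option maxHeartbeats 1000000 in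
theorem tripod_integral_normalized :
    IntegrableOn
      (fun u : ℂ => u.im ^ 4 / (‖u‖ ^ 4 * ‖u - 1‖ ^ 4))
      {z : ℂ | 0 < z.im} volume ∧
    ∫ u in {z : ℂ | 0 < z.im},
        u.im ^ 4 / (‖u‖ ^ 4 * ‖u - 1‖ ^ 4) = 3 * π / 8 := by
  have hemb := Complex.measurableEquivRealProd.measurableEmbedding
  have hint : IntegrableOn HI (univ ×ˢ Ioi (0:ℝ)) volume := by
    rw [IntegrableOn, prodRestrict_eq]; exact integrable_HI
  constructor
  · rw [fun_eq, set_eq]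
    exact (MeasurePreserving.integrableOn_comp_preimage (f := HI)
      (s := univ ×ˢ Ioi (0:ℝ)) Complex.volume_preserving_equiv_real_prod hemb).mpr hint
  · rw [fun_eq, set_eq,
      MeasurePreserving.setIntegral_preimage_emb
        Complex.volume_preserving_equiv_real_prod hemb HI (univ ×ˢ Ioi (0:ℝ))]
    rw [← integral_HI, ← prodRestrict_eq]
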